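/- For every distributive lattice D, the set Mea(D) of Γ-valued measures on D is a closed subspace of the product space Γ^D, and hence is itself a Priestley space. -/

import Mathlib

open scoped Classical

noncomputable section

/-- Validity predicate: `(r, false)` encodes `r⁻` for `r ∈ (0,1]`;
`(q, true)` encodes `q°` for rational `q ∈ [0,1]`. -/
def GammaValid (x : ℝ × Bool) : Prop :=
  (x.2 = false ∧ 0 < x.1 ∧ x.1 ≤ 1) ∨
  (x.2 = true ∧ 0 ≤ x.1 ∧ x.1 ≤ 1 ∧ ∃ q : ℚ, (q : ℝ) = x.1)

lemma gammaValid_of (r : ℝ) (b : Bool) (h0 : 0 ≤ r) (h1 : r ≤ 1)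
    (hr : b = true → ∃ q : ℚ, (q : ℝ) = r) (hm : b = false → 0 < r) :
    GammaValid (r, b) := by
  cases b
  · exact Or.inl ⟨rfl, hm rfl, h1⟩
  · exact Or.inr ⟨rfl, h0, h1, hr rfl⟩

/-- The doubled unit interval `Γ`, ordered lexicographically:
compare real values first, and `r⁻ < r°` at equal value. -/
abbrev Gamma : Type := {x : Lex (ℝ × Bool) // GammaValid (ofLex x)}

def Gamma.re (x : Gamma) : ℝ := (ofLex x.1).1
def Gamma.tag (x : Gamma) : Bool := (ofLex x.1).2

def Gamma.mk' (r : ℝ) (b : Bool) (h : GammaValid (r, b)) : Gamma := ⟨toLex (r, b), h⟩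

@[simp] lemma Gamma.re_mk' (r : ℝ) (b : Bool) (h : GammaValid (r, b)) :
    (Gamma.mk' r b h).re = r := rfl
@[simp] lemma Gamma.tag_mk' (r : ℝ) (b : Bool) (h : GammaValid (r, b)) :
    (Gamma.mk' r b h).tag = b := rfl

/-- `0°` -/
def gzero : Gamma :=
  Gamma.mk' 0 true (gammaValid_of _ _ le_rfl zero_le_one (fun _ => ⟨0, by norm_num⟩) (by simp))

/-- `1°` -/
def gone : Gamma :=
  Gamma.mk' 1 true (gammaValid_of _ _ zero_le_one le_rfl (fun _ => ⟨1, by norm_num⟩) (by simp))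

/-- `q°` for a rational `q ∈ [0,1]`. -/
def mkCirc (q : ℚ) (h0 : 0 ≤ q) (h1 : q ≤ 1) : Gamma :=
  Gamma.mk' (q : ℝ) true
    (gammaValid_of _ _ (by exact_mod_cast h0) (by exact_mod_cast h1)
      (fun _ => ⟨q, rfl⟩) (by simp))

/-- `r⁻` for a real `r ∈ (0,1]`. -/
def mkMinus (r : ℝ) (h0 : 0 < r) (h1 : r ≤ 1) : Gamma :=
  Gamma.mk' r false
    (gammaValid_of _ _ h0.le h1 (by simp) (fun _ => h0))

lemma Gamma.le_iff {x y : Gamma} :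
    x ≤ y ↔ x.re < y.re ∨ (x.re = y.re ∧ x.tag ≤ y.tag) := by
  change x.1 ≤ y.1 ↔ _
  rw [show x.1 = toLex (ofLex x.1) from rfl, show y.1 = toLex (ofLex y.1) from rfl,
    Prod.Lex.le_iff]
  rfl

lemma Gamma.re_nonneg (x : Gamma) : 0 ≤ x.re := by
  rcases x.2 with ⟨_, h, _⟩ | ⟨_, h, _⟩ <;> [exact le_of_lt h; exact h]

lemma Gamma.re_le_one (x : Gamma) : x.re ≤ 1 := by
  rcases x.2 with ⟨_, _, h⟩ | ⟨_, _, h, _⟩ <;> exact h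

lemma Gamma.tag_rat {x : Gamma} (h : x.tag = true) : ∃ q : ℚ, (q : ℝ) = x.re := by
  rcases x.2 with ⟨h', _⟩ | ⟨_, _, _, hq⟩
  · exact absurd (h'.symm.trans h) (by simp)
  · exact hq

lemma Gamma.tag_pos {x : Gamma} (h : x.tag = false) : 0 < x.re := by
  rcases x.2 with ⟨_, h', _⟩ | ⟨h', _⟩
  · exact h'
  · exact absurd (h'.symm.trans h) (by simp)

lemma Gamma.re_mono {x y : Gamma} (h : x ≤ y) : x.re ≤ y.re := by
  rcases Gamma.le_iff.1 h with h | ⟨h, _⟩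
  · exact le_of_lt h
  · exact le_of_eq h

lemma Gamma.ext' {x y : Gamma} (hre : x.re = y.re) (htag : x.tag = y.tag) : x = y := by
  apply Subtype.ext
  have hx : x.1 = toLex (x.re, x.tag) := rfl
  have hy : y.1 = toLex (y.re, y.tag) := rfl
  rw [hx, hy, hre, htag]

/-- The partial minus `∸` on `Γ`, made total by returning `0°` outside its domain
`{(x,y) | y ≤ x}`.  On the domain:  `r° ∸ s° = (r−s)°`, `r⁻ ∸ s° = (r−s)⁻`, and
`r° ∸ s⁻ = r⁻ ∸ s⁻ = (r−s)°` if `r−s ∈ ℚ`, `(r−s)⁻` otherwise. -/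
def gsub (x y : Gamma) : Gamma :=
  if h : y ≤ x then
    Gamma.mk' (x.re - y.re)
      (if y.tag then x.tag else if (∃ q : ℚ, (q : ℝ) = x.re - y.re) then true else false)
      (by
        have hle : y.re ≤ x.re := Gamma.re_mono h
        have hx1 := x.re_le_one
        have hy0 := y.re_nonneg
        apply gammaValid_of _ _ (by linarith) (by linarith)
        · intro ht
          split_ifs at ht with hy hq
          · obtain ⟨qx, hqx⟩ := Gamma.tag_rat ht
            obtain ⟨qy, hqy⟩ := Gamma.tag_rat hy
            exact ⟨qx - qy, by push_cast [hqx, hqy]; ring⟩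
          · exact hq
        · intro ht
          split_ifs at ht with hy hq
          · rcases Gamma.le_iff.1 h with hlt | ⟨_, htag⟩
            · linarith
            · rw [hy, ht] at htag; exact absurd htag (by decide)
          · refine lt_of_le_of_ne (by linarith) fun e => hq ⟨0, by rw [← e]; norm_num⟩)
  else gzero

/-- The derived operation `∸'` given by `x ∸' y = ⋁ {x ∸ q° ∣ y < q° ≤ x}`,
described here by its explicit formula (and again made total by `0°` off-domain). -/
def gsub' (x y : Gamma) : Gamma :=
  if h : y ≤ x then
    Gamma.mk' (x.re - y.re)
      (if x.re - y.re = 0 then true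
       else if (y.tag = false ∧ ∃ q : ℚ, (q : ℝ) = y.re) then x.tag else false)
      (by
        have hle : y.re ≤ x.re := Gamma.re_mono h
        have hx1 := x.re_le_one
        have hy0 := y.re_nonneg
        apply gammaValid_of _ _ (by linarith) (by linarith)
        · intro ht
          split_ifs at ht with h0 hc
          · exact ⟨0, by rw [h0]; norm_num⟩
          · obtain ⟨qx, hqx⟩ := Gamma.tag_rat ht
            obtain ⟨qy, hqy⟩ := hc.2
            exact ⟨qx - qy, by push_cast [hqx, hqy]; ring⟩
        · intro ht
          split_ifs at ht with h0 hc
          · exact lt_of_le_of_ne (by linarith) (Ne.symm h0)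
          · exact lt_of_le_of_ne (by linarith) (Ne.symm h0))
  else gzero

/-- The partial plus on `Γ` (total, with junk value `0°` when the sum exceeds `1`):
`r° + s° = (r+s)°` and any sum involving a `⁻`-element is a `⁻`-element. -/
def gadd (x y : Gamma) : Gamma :=
  if h : x.re + y.re ≤ 1 then
    Gamma.mk' (x.re + y.re) (x.tag && y.tag)
      (by
        have hx0 := x.re_nonneg
        have hy0 := y.re_nonneg
        apply gammaValid_of _ _ (by linarith) h
        · intro ht
          rw [Bool.and_eq_true] at ht
          obtain ⟨qx, hqx⟩ := Gamma.tag_rat ht.1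
          obtain ⟨qy, hqy⟩ := Gamma.tag_rat ht.2
          exact ⟨qx + qy, by push_cast [hqx, hqy]; ring⟩
        · intro ht
          rcases Bool.and_eq_false_iff.1 ht with hx | hy
          · have := Gamma.tag_pos hx; linarith
          · have := Gamma.tag_pos hy; linarith)
  else gzero

/-- Finite sums in `Γ` (total, with junk value `0°` when the real sum exceeds `1`):
real parts add up, and the result is a `°`-element iff every summand is. -/
def gsum {α : Type*} (s : Finset α) (f : α → Gamma) : Gamma :=
  if h : ∑ x ∈ s, (f x).re ≤ 1 then
    Gamma.mk' (∑ x ∈ s, (f x).re) (if ∀ x ∈ s, (f x).tag = true then true else false)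
      (by
        have h0 : 0 ≤ ∑ x ∈ s, (f x).re :=
          Finset.sum_nonneg fun x _ => (f x).re_nonneg
        apply gammaValid_of _ _ h0 h
        · intro ht
          split_ifs at ht with hall
          · have : ∀ x ∈ s, ∃ q : ℚ, (q : ℝ) = (f x).re := fun x hx => Gamma.tag_rat (hall x hx)
            choose g hg using this
            refine ⟨∑ x ∈ s.attach, g x.1 x.2, ?_⟩
            push_cast
            rw [← Finset.sum_attach s fun x => (f x).re]
            exact Finset.sum_congr rfl fun x _ => hg x.1 x.2
        · intro ht
          split_ifs at ht with hall
          · push_neg at hall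
            obtain ⟨x, hxs, hx⟩ := hall
            replace hx : (f x).tag = false := by
              cases hxt : (f x).tag
              · rfl
              · exact absurd hxt hx
            calc (0:ℝ) < (f x).re := Gamma.tag_pos hx
              _ ≤ _ := Finset.single_le_sum (fun y _ => (f y).re_nonneg) hxs)
  else gzero

/-- The collapsing map `γ : Γ → [0,1]`, `r⁻, r° ↦ r`. -/
def gammaMap (x : Gamma) : unitInterval := ⟨x.re, x.re_nonneg, x.re_le_one⟩

/-- The section `ι : [0,1] → Γ`: rationals go to `°`-elements, irrationals to `⁻`-elements. -/
def iota (r : unitInterval) : Gamma :=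
  if h : ∃ q : ℚ, (q : ℝ) = r.1 then
    Gamma.mk' r.1 true (gammaValid_of _ _ r.2.1 r.2.2 (fun _ => h) (by simp))
  else
    Gamma.mk' r.1 false
      (gammaValid_of _ _ r.2.1 r.2.2 (by simp)
        (fun _ => lt_of_le_of_ne r.2.1 fun e => h ⟨0, by rw [← e]; norm_num⟩))

/-- Subbasis for the Priestley topology on `Γ`: the sets `↑p°` (for `p ∈ ℚ ∩ [0,1]`) and
`↓q⁻` (for `q ∈ ℚ ∩ (0,1]`). -/
def gammaSubbasis : Set (Set Gamma) :=
  {S | ∃ x : Gamma, x.tag = true ∧ S = Set.Ici x} ∪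
  {S | ∃ x : Gamma, x.tag = false ∧ (∃ q : ℚ, (q : ℝ) = x.re) ∧ S = Set.Iic x}

instance : TopologicalSpace Gamma := TopologicalSpace.generateFrom gammaSubbasis

/-- `Γ`-valued (finitely additive, probability) measures on a bounded lattice `D`. -/
def IsGMeasure {D : Type*} [Lattice D] [BoundedOrder D] (μ : D → Gamma) : Prop :=
  μ ⊥ = gzero ∧ μ ⊤ = gone ∧ Monotone μ ∧
  ∀ a b : D, gsub' (μ a) (μ (a ⊓ b)) ≤ gsub (μ (a ⊔ b)) (μ b) ∧
    gsub' (μ (a ⊔ b)) (μ b) ≤ gsub (μ a) (μ (a ⊓ b))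

/-- Classical finitely additive probability measures on a bounded lattice `D`. -/
def IsCMeasure {D : Type*} [Lattice D] [BoundedOrder D] (m : D → ℝ) : Prop :=
  m ⊥ = 0 ∧ m ⊤ = 1 ∧ Monotone m ∧
  ∀ a b : D, m a + m b = m (a ⊔ b) + m (a ⊓ b)


/-! ### Auxiliary development -/

open TopologicalSpace Set

lemma gzero_le (x : Gamma) : gzero ≤ x := by
  rcases lt_or_eq_of_le x.re_nonneg with h | h
  · exact Gamma.le_iff.2 (Or.inl h)
  · refine Gamma.le_iff.2 (Or.inr ⟨h, ?_⟩)
    cases hx : x.tag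
    · exact absurd (Gamma.tag_pos hx) (by rw [← h]; exact lt_irrefl 0)
    · exact le_rfl

lemma Gamma.lt_iff {x y : Gamma} :
    x < y ↔ x.re < y.re ∨ (x.re = y.re ∧ x.tag = false ∧ y.tag = true) := by
  constructor
  · intro h
    rcases Gamma.le_iff.1 h.le with h' | ⟨h1, h2⟩
    · exact Or.inl h'
    · refine Or.inr ⟨h1, ?_⟩
      cases hx : x.tag <;> cases hy : y.tag
      · exact absurd (Gamma.ext' h1 (hx.trans hy.symm)) h.ne
      · exact ⟨rfl, rfl⟩
      · rw [hx, hy] at h2; exact absurd h2 (by decide)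
      · exact absurd (Gamma.ext' h1 (hx.trans hy.symm)) h.ne
  · rintro (h | ⟨h1, h2, h3⟩)
    · exact lt_of_le_of_ne (Gamma.le_iff.2 (Or.inl h)) (fun e => absurd (congrArg Gamma.re e) h.ne)
    · refine lt_of_le_of_ne (Gamma.le_iff.2 (Or.inr ⟨h1, by rw [h2, h3]; decide⟩)) ?_
      intro e
      rw [e, h3] at h2
      exact absurd h2 (by decide)

/-- Separation by a `°`-element from above. -/
lemma exists_sep {b a : Gamma} (h : b < a) :
    ∃ v : Gamma, v.tag = true ∧ v ≤ a ∧ ¬ v ≤ b := by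
  rcases Gamma.lt_iff.1 h with h' | ⟨h1, h2, h3⟩
  · obtain ⟨q, hq1, hq2⟩ := exists_rat_btwn h'
    have hq0 : (0:ℝ) < q := lt_of_le_of_lt b.re_nonneg hq1
    have hq1' : (q:ℝ) ≤ 1 := le_of_lt (lt_of_lt_of_le hq2 a.re_le_one)
    refine ⟨Gamma.mk' q true (gammaValid_of _ _ hq0.le hq1' (fun _ => ⟨q, rfl⟩) (by simp)), rfl,
      Gamma.le_iff.2 (Or.inl hq2), fun hle => ?_⟩
    exact absurd (Gamma.re_mono hle) (not_le.2 hq1)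
  · exact ⟨a, h3, le_rfl, not_le.2 h⟩

/-- Separation by a rational `⁻`-element from below. -/
lemma exists_sep' {x a : Gamma} (h : x < a) :
    ∃ v : Gamma, v.tag = false ∧ (∃ q : ℚ, (q:ℝ) = v.re) ∧ x ≤ v ∧ v < a := by
  rcases Gamma.lt_iff.1 h with h' | ⟨h1, h2, h3⟩
  · obtain ⟨q, hq1, hq2⟩ := exists_rat_btwn h'
    have hq0 : (0:ℝ) < q := lt_of_le_of_lt x.re_nonneg hq1
    have hq1' : (q:ℝ) ≤ 1 := le_of_lt (lt_of_lt_of_le hq2 a.re_le_one)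
    exact ⟨mkMinus q hq0 hq1', rfl, ⟨q, rfl⟩, Gamma.le_iff.2 (Or.inl hq1),
      Gamma.lt_iff.2 (Or.inl hq2)⟩
  · exact ⟨x, h2, by rw [h1]; exact Gamma.tag_rat h3, le_rfl, h⟩

lemma isOpen_Ici_gamma {v : Gamma} (hv : v.tag = true) : IsOpen (Ici v) :=
  TopologicalSpace.GenerateOpen.basic _ (Or.inl ⟨v, hv, rfl⟩)

lemma isOpen_Iic_gamma {v : Gamma} (hv : v.tag = false) (hq : ∃ q : ℚ, (q:ℝ) = v.re) :
    IsOpen (Iic v) :=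
  TopologicalSpace.GenerateOpen.basic _ (Or.inr ⟨v, hv, hq, rfl⟩)

lemma bool_le_false {b : Bool} (h : b ≤ false) : b = false := by
  cases hb : b
  · rfl
  · rw [hb] at h; exact absurd h (by decide)

lemma bool_true_le {b : Bool} (h : true ≤ b) : b = true := by
  cases hb : b
  · rw [hb] at h; exact absurd h (by decide)
  · rfl

lemma isClopen_Ici_gamma {v : Gamma} (hv : v.tag = true) : IsClopen (Ici v) := by
  refine ⟨?_, isOpen_Ici_gamma hv⟩
  rw [← isOpen_compl_iff, compl_Ici]
  rcases eq_or_lt_of_le v.re_nonneg with h0 | h0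
  · have he : Iio v = (∅ : Set Gamma) := by
      ext x
      simp only [mem_Iio, mem_empty_iff_false, iff_false]
      intro hx
      rcases Gamma.lt_iff.1 hx with h' | ⟨h1, h2, _⟩
      · exact absurd (lt_of_le_of_lt x.re_nonneg h') (by rw [← h0]; exact lt_irrefl 0)
      · exact absurd (Gamma.tag_pos h2) (by rw [h1, ← h0]; exact lt_irrefl 0)
    rw [he]; exact isOpen_empty
  · have he : Iio v = Iic (mkMinus v.re h0 v.re_le_one) := by
      ext x
      simp only [mem_Iio, mem_Iic]
      rw [Gamma.lt_iff, Gamma.le_iff]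
      have hre : (mkMinus v.re h0 v.re_le_one).re = v.re := rfl
      have htag : (mkMinus v.re h0 v.re_le_one).tag = false := rfl
      rw [hre, htag]
      constructor
      · rintro (h | ⟨h1, h2, _⟩)
        · exact Or.inl h
        · exact Or.inr ⟨h1, by rw [h2]⟩
      · rintro (h | ⟨h1, h2⟩)
        · exact Or.inl h
        · exact Or.inr ⟨h1, bool_le_false h2, hv⟩
    rw [he]
    exact isOpen_Iic_gamma rfl ⟨(Gamma.tag_rat hv).choose, (Gamma.tag_rat hv).choose_spec⟩

/-- The set of points with real part `> c` is open. -/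
lemma isOpen_reGt (c : ℝ) : IsOpen {x : Gamma | c < x.re} := by
  rw [isOpen_iff_forall_mem_open]
  intro x hx
  rcases eq_or_lt_of_le x.re_nonneg with h0 | h0
  · refine ⟨univ, fun z _ => ?_, isOpen_univ, mem_univ x⟩
    exact lt_of_lt_of_le (by rw [h0]; exact hx) z.re_nonneg
  · obtain ⟨q, hq1, hq2⟩ := exists_rat_btwn (max_lt hx h0 : max c 0 < x.re)
    have hq0 : (0:ℝ) < q := lt_of_le_of_lt (le_max_right c 0) hq1
    have hqc : c < q := lt_of_le_of_lt (le_max_left c 0) hq1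
    have hq1' : (q:ℝ) ≤ 1 := le_of_lt (lt_of_lt_of_le hq2 x.re_le_one)
    refine ⟨Ici (Gamma.mk' q true (gammaValid_of _ _ hq0.le hq1' (fun _ => ⟨q, rfl⟩) (by simp))),
      fun z hz => ?_, isOpen_Ici_gamma rfl, Gamma.le_iff.2 (Or.inl hq2)⟩
    exact lt_of_lt_of_le hqc (Gamma.re_mono hz)

/-- The set of points with real part `< c` is open. -/
lemma isOpen_reLt (c : ℝ) : IsOpen {x : Gamma | x.re < c} := by
  rw [isOpen_iff_forall_mem_open]
  intro x hx
  rcases le_or_gt c 1 with hc | hc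
  · obtain ⟨q, hq1, hq2⟩ := exists_rat_btwn (show x.re < c from hx)
    have hq0 : (0:ℝ) < q := lt_of_le_of_lt x.re_nonneg hq1
    have hq1' : (q:ℝ) ≤ 1 := le_of_lt (lt_of_lt_of_le hq2 hc)
    refine ⟨Iic (mkMinus q hq0 hq1'), fun z hz => ?_, isOpen_Iic_gamma rfl ⟨q, rfl⟩,
      Gamma.le_iff.2 (Or.inl hq1)⟩
    exact lt_of_le_of_lt (Gamma.re_mono hz : z.re ≤ (q:ℝ)) hq2
  · exact ⟨univ, fun z _ => lt_of_le_of_lt z.re_le_one hc, isOpen_univ, mem_univ x⟩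

/-- Characterization of `v ≤ gsub' x y` for `v = q°`, `q > 0`. -/
lemma le_gsub'_iff {v x y : Gamma} (hv : v.tag = true) (hq : 0 < v.re) :
    v ≤ gsub' x y ↔ v.re < x.re - y.re ∨
      (v.re = x.re - y.re ∧ y.tag = false ∧ (∃ r : ℚ, (r:ℝ) = y.re) ∧ x.tag = true) := by
  by_cases h : y ≤ x
  · rw [gsub', dif_pos h, Gamma.le_iff, Gamma.re_mk', Gamma.tag_mk', hv]
    constructor
    · rintro (h' | ⟨h1, h2⟩)
      · exact Or.inl h'
      · refine Or.inr ⟨h1, ?_⟩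
        have hne : ¬ (x.re - y.re = 0) := by rw [← h1]; exact ne_of_gt hq
        rw [if_neg hne] at h2
        have h2' := bool_true_le h2
        by_cases hc : y.tag = false ∧ ∃ r : ℚ, (r:ℝ) = y.re
        · rw [if_pos hc] at h2'; exact ⟨hc.1, hc.2, h2'⟩
        · rw [if_neg hc] at h2'; exact absurd h2' (by decide)
    · rintro (h' | ⟨h1, h2, h3, h4⟩)
      · exact Or.inl h'
      · refine Or.inr ⟨h1, ?_⟩
        have hne : ¬ (x.re - y.re = 0) := by rw [← h1]; exact ne_of_gt hq
        rw [if_neg hne, if_pos ⟨h2, h3⟩, h4]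
  · rw [gsub', dif_neg h]
    constructor
    · intro h'
      exact absurd (Gamma.re_mono h') (not_le.2 hq)
    · rintro (h' | ⟨h1, _⟩)
      · exact absurd (Gamma.le_iff.2 (Or.inl (by linarith [Gamma.re_nonneg v]))) h
      · exact absurd (Gamma.le_iff.2 (Or.inl (by linarith))) h

/-- Characterization of `v ≤ gsub z w` for `v = q°`, `q > 0`. -/
lemma le_gsub_iff {v z w : Gamma} (hv : v.tag = true) (hq : 0 < v.re) :
    v ≤ gsub z w ↔ v.re < z.re - w.re ∨
      (v.re = z.re - w.re ∧ (w.tag = true → z.tag = true)) := by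
  by_cases h : w ≤ z
  · rw [gsub, dif_pos h, Gamma.le_iff, Gamma.re_mk', Gamma.tag_mk', hv]
    constructor
    · rintro (h' | ⟨h1, h2⟩)
      · exact Or.inl h'
      · refine Or.inr ⟨h1, fun hw => ?_⟩
        rw [if_pos hw] at h2
        exact bool_true_le h2
    · rintro (h' | ⟨h1, h2⟩)
      · exact Or.inl h'
      · refine Or.inr ⟨h1, ?_⟩
        cases hw : w.tag
        · rw [if_neg (by simp : ¬ (false = true)),
            if_pos (⟨(Gamma.tag_rat hv).choose, by
              rw [(Gamma.tag_rat hv).choose_spec, ← h1]⟩ : ∃ r : ℚ, (r:ℝ) = z.re - w.re)]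
        · rw [if_pos rfl, h2 hw]
  · rw [gsub, dif_neg h]
    constructor
    · intro h'
      exact absurd (Gamma.re_mono h') (not_le.2 hq)
    · rintro (h' | ⟨h1, _⟩)
      · exact absurd (Gamma.le_iff.2 (Or.inl (by linarith [Gamma.re_nonneg v]))) h
      · exact absurd (Gamma.le_iff.2 (Or.inl (by linarith))) h

lemma gzero_eq_of {v : Gamma} (hv : v.tag = true) (h0 : v.re = 0) : v = gzero :=
  Gamma.ext' h0 hv

lemma isOpen_le_gsub' {v : Gamma} (hv : v.tag = true) :
    IsOpen {p : Gamma × Gamma | v ≤ gsub' p.1 p.2} := by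
  rcases eq_or_lt_of_le v.re_nonneg with h0 | h0
  · have he : {p : Gamma × Gamma | v ≤ gsub' p.1 p.2} = univ := by
      ext p
      simp only [mem_setOf_eq, mem_univ, iff_true]
      rw [gzero_eq_of hv h0.symm]
      exact gzero_le _
    rw [he]; exact isOpen_univ
  rw [isOpen_iff_forall_mem_open]
  rintro ⟨x, y⟩ hxy
  rcases (le_gsub'_iff hv h0).1 hxy with h' | ⟨h1, h2, h3, h4⟩
  · set d := x.re - y.re
    set δ := d - v.re with hδ
    have hδ0 : 0 < δ := sub_pos.2 h'
    refine ⟨{x' : Gamma | x.re - δ/2 < x'.re} ×ˢ {y' : Gamma | y'.re < y.re + δ/2},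
      ?_, (isOpen_reGt _).prod (isOpen_reLt _), ⟨by simp only [mem_setOf_eq]; linarith, by simp only [mem_setOf_eq]; linarith⟩⟩
    rintro ⟨x', y'⟩ ⟨hx', hy'⟩
    refine (le_gsub'_iff hv h0).2 (Or.inl ?_)
    simp only [mem_setOf_eq] at hx' hy'
    have : d = x.re - y.re := rfl
    simp only [mem_setOf_eq]
    linarith
  · refine ⟨Ici x ×ˢ Iic y, ?_, (isOpen_Ici_gamma h4).prod (isOpen_Iic_gamma h2 h3),
      ⟨self_mem_Ici, self_mem_Iic⟩⟩
    rintro ⟨x', y'⟩ ⟨hx', hy'⟩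
    simp only [mem_Ici] at hx'
    simp only [mem_Iic] at hy'
    have hxre : x.re ≤ x'.re := Gamma.re_mono hx'
    have hyre : y'.re ≤ y.re := Gamma.re_mono hy'
    rcases lt_or_eq_of_le (by linarith : v.re ≤ x'.re - y'.re) with h' | h'
    · exact (le_gsub'_iff hv h0).2 (Or.inl h')
    · have hx2 : x.re = x'.re := by linarith
      have hy2 : y'.re = y.re := by linarith
      refine (le_gsub'_iff hv h0).2 (Or.inr ⟨h', ?_, ?_, ?_⟩)
      · rcases Gamma.le_iff.1 hy' with h'' | ⟨_, h''⟩
        · exact absurd h'' (not_lt.2 (le_of_eq hy2.symm))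
        · rw [h2] at h''; exact bool_le_false h''
      · rw [hy2]; exact h3
      · rcases Gamma.le_iff.1 hx' with h'' | ⟨_, h''⟩
        · exact absurd h'' (not_lt.2 (le_of_eq hx2.symm))
        · rw [h4] at h''; exact bool_true_le h''

lemma isClosed_le_gsub {v : Gamma} (hv : v.tag = true) :
    IsClosed {p : Gamma × Gamma | v ≤ gsub p.1 p.2} := by
  rcases eq_or_lt_of_le v.re_nonneg with h0 | h0
  · have he : {p : Gamma × Gamma | v ≤ gsub p.1 p.2} = univ := by
      ext p
      simp only [mem_setOf_eq, mem_univ, iff_true]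
      rw [gzero_eq_of hv h0.symm]
      exact gzero_le _
    rw [he]; exact isClosed_univ
  rw [← isOpen_compl_iff, isOpen_iff_forall_mem_open]
  rintro ⟨z, w⟩ hzw
  simp only [mem_compl_iff, mem_setOf_eq] at hzw
  rw [le_gsub_iff hv h0] at hzw
  push_neg at hzw
  obtain ⟨hzw1, hzw2⟩ := hzw
  rcases lt_or_eq_of_le hzw1 with hd | hd
  · set δ := v.re - (z.re - w.re) with hδ
    have hδ0 : 0 < δ := sub_pos.2 hd
    refine ⟨{z' : Gamma | z'.re < z.re + δ/2} ×ˢ {w' : Gamma | w.re - δ/2 < w'.re},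
      ?_, (isOpen_reLt _).prod (isOpen_reGt _), ⟨by simp only [mem_setOf_eq]; linarith, by simp only [mem_setOf_eq]; linarith⟩⟩
    rintro ⟨z', w'⟩ ⟨hz', hw'⟩
    simp only [mem_setOf_eq] at hz' hw'
    simp only [mem_compl_iff, mem_setOf_eq]
    rw [le_gsub_iff hv h0]
    push_neg
    constructor
    · linarith
    · intro h
      exfalso
      linarith
  · obtain ⟨hw, hz⟩ := by
      have := hzw2 hd.symm
      exact this
    have hztag : z.tag = false := by
      cases hz' : z.tag
      · rfl
      · exact absurd hz' hz
    have hzrat : ∃ r : ℚ, (r:ℝ) = z.re := by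
      obtain ⟨qw, hqw⟩ := Gamma.tag_rat hw
      obtain ⟨qv, hqv⟩ := Gamma.tag_rat hv
      exact ⟨qw + qv, by push_cast [hqw, hqv]; linarith⟩
    refine ⟨Iic z ×ˢ Ici w, ?_, (isOpen_Iic_gamma hztag hzrat).prod (isOpen_Ici_gamma hw),
      ⟨self_mem_Iic, self_mem_Ici⟩⟩
    rintro ⟨z', w'⟩ ⟨hz', hw'⟩
    simp only [mem_Iic] at hz'
    simp only [mem_Ici] at hw'
    have hzre : z'.re ≤ z.re := Gamma.re_mono hz'
    have hwre : w.re ≤ w'.re := Gamma.re_mono hw'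
    simp only [mem_compl_iff, mem_setOf_eq]
    rw [le_gsub_iff hv h0]
    push_neg
    constructor
    · linarith
    · intro hd'
      have hz2 : z'.re = z.re := by linarith
      have hw2 : w'.re = w.re := by linarith
      refine ⟨?_, ?_⟩
      · rcases Gamma.le_iff.1 hw' with h'' | ⟨_, h''⟩
        · exact absurd h'' (not_lt.2 (le_of_eq hw2))
        · rw [hw] at h''; exact bool_true_le h''
      · rcases Gamma.le_iff.1 hz' with h'' | ⟨_, h''⟩
        · exact absurd h'' (not_lt.2 (le_of_eq hz2.symm))
        · rw [hztag] at h''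
          rw [bool_le_false h'']
          exact Bool.false_ne_true

lemma isClosed_gamma_le : IsClosed {p : Gamma × Gamma | p.1 ≤ p.2} := by
  rw [← isOpen_compl_iff, isOpen_iff_forall_mem_open]
  rintro ⟨a, b⟩ hab
  simp only [mem_compl_iff, mem_setOf_eq] at hab
  obtain ⟨v, hv, hva, hvb⟩ := exists_sep (not_le.1 hab)
  refine ⟨Ici v ×ˢ (Ici v)ᶜ, ?_, (isOpen_Ici_gamma hv).prod (isClopen_Ici_gamma hv).1.isOpen_compl,
    ⟨hva, hvb⟩⟩
  rintro ⟨a', b'⟩ ⟨ha', hb'⟩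
  simp only [mem_compl_iff, mem_setOf_eq]
  intro hle
  exact hb' (le_trans ha' hle)

lemma isClosed_gsub_main :
    IsClosed {p : (Gamma × Gamma) × Gamma × Gamma | gsub' p.1.1 p.1.2 ≤ gsub p.2.1 p.2.2} := by
  rw [← isOpen_compl_iff, isOpen_iff_forall_mem_open]
  rintro ⟨⟨x, y⟩, z, w⟩ h
  simp only [mem_compl_iff, mem_setOf_eq] at h
  obtain ⟨v, hv, hva, hvb⟩ := exists_sep (not_le.1 h)
  refine ⟨{p : Gamma × Gamma | v ≤ gsub' p.1 p.2} ×ˢ {p : Gamma × Gamma | v ≤ gsub p.1 p.2}ᶜ,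
    ?_, (isOpen_le_gsub' hv).prod (isClosed_le_gsub hv).isOpen_compl, ⟨hva, hvb⟩⟩
  rintro ⟨⟨x', y'⟩, z', w'⟩ ⟨h1, h2⟩
  simp only [mem_compl_iff, mem_setOf_eq] at h1 h2 ⊢
  intro hle
  exact h2 (le_trans h1 hle)

lemma isClosed_le_fun {X : Type*} [TopologicalSpace X] {f g : X → Gamma}
    (hf : Continuous f) (hg : Continuous g) : IsClosed {x | f x ≤ g x} :=
  isClosed_gamma_le.preimage (hf.prodMk hg)

lemma isClosed_gsub_fun {X : Type*} [TopologicalSpace X] {f g h k : X → Gamma}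
    (hf : Continuous f) (hg : Continuous g) (hh : Continuous h) (hk : Continuous k) :
    IsClosed {x | gsub' (f x) (g x) ≤ gsub (h x) (k x)} :=
  isClosed_gsub_main.preimage ((hf.prodMk hg).prodMk (hh.prodMk hk))

/-! ### Completeness of `Γ` -/

noncomputable def gSup (S : Set Gamma) : Gamma :=
  if h : ∃ x ∈ S, x.re = sSup (insert 0 (Gamma.re '' S)) ∧ x.tag = true then h.choose
  else if h2 : 0 < sSup (insert 0 (Gamma.re '' S)) then
    mkMinus _ h2 (csSup_le (insert_nonempty _ _) (by
      rintro y (rfl | ⟨x, _, rfl⟩)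
      · exact zero_le_one
      · exact x.re_le_one))
  else gzero

lemma isLUB_gSup (S : Set Gamma) : IsLUB S (gSup S) := by
  set T := insert (0:ℝ) (Gamma.re '' S) with hT
  have hbdd : BddAbove T := ⟨1, by
    rintro y (rfl | ⟨x, _, rfl⟩)
    · exact zero_le_one
    · exact x.re_le_one⟩
  have hne : T.Nonempty := insert_nonempty _ _
  have hres : ∀ x ∈ S, x.re ≤ sSup T := fun x hx =>
    le_csSup hbdd (mem_insert_of_mem _ ⟨x, hx, rfl⟩)
  have h0s : 0 ≤ sSup T := le_csSup hbdd (mem_insert _ _)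
  have hub : ∀ u : Gamma, u ∈ upperBounds S → sSup T ≤ u.re := fun u hu =>
    csSup_le hne (by
      rintro y (rfl | ⟨x, hx, rfl⟩)
      · exact u.re_nonneg
      · exact Gamma.re_mono (hu hx))
  rw [gSup]
  split_ifs with h h2
  · obtain ⟨hmem, hre, htag⟩ := h.choose_spec
    constructor
    · intro x hx
      rcases lt_or_eq_of_le (le_of_le_of_eq (hres x hx) hre.symm) with h' | h'
      · exact Gamma.le_iff.2 (Or.inl h')
      · exact Gamma.le_iff.2 (Or.inr ⟨h', by rw [htag]; exact Bool.le_true _⟩)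
    · intro u hu
      exact hu hmem
  · constructor
    · intro x hx
      rcases lt_or_eq_of_le (hres x hx) with h' | h'
      · exact Gamma.le_iff.2 (Or.inl h')
      · refine Gamma.le_iff.2 (Or.inr ⟨h', ?_⟩)
        have hxt : x.tag = false := by
          cases hxt : x.tag
          · rfl
          · exact absurd ⟨x, hx, h', hxt⟩ h
        rw [hxt]
        exact Bool.false_le _
    · intro u hu
      have := hub u hu
      rcases lt_or_eq_of_le this with h' | h'
      · exact Gamma.le_iff.2 (Or.inl h')
      · exact Gamma.le_iff.2 (Or.inr ⟨h', Bool.false_le _⟩)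
  · constructor
    · intro x hx
      have h1 : x.re ≤ 0 := le_trans (hres x hx) (not_lt.1 h2)
      have h1' : x.re = 0 := le_antisymm h1 x.re_nonneg
      have hxt : x.tag = true := by
        cases hxt : x.tag
        · exact absurd (Gamma.tag_pos hxt) (by rw [h1']; exact lt_irrefl 0)
        · rfl
      exact absurd ⟨x, hx, le_antisymm (hres x hx) (by rw [h1']; exact not_lt.1 h2), hxt⟩ h
    · intro u _
      exact gzero_le u

noncomputable instance : SupSet Gamma := ⟨gSup⟩

noncomputable def gammaCompleteLattice : CompleteLattice Gamma :=
  { (inferInstance : Lattice Gamma), completeLatticeOfSup Gamma isLUB_gSup with }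

noncomputable def gammaCompleteLinearOrder : CompleteLinearOrder Gamma :=
  letI C : CompleteLattice Gamma := gammaCompleteLattice
  letI : BoundedOrder Gamma :=
    { top := C.top, le_top := C.le_top, bot := C.bot, bot_le := C.bot_le }
  { C, Subtype.instLinearOrder _, LinearOrder.toBiheytingAlgebra _ with }

/-! ### The topology on `Γ` is the order topology -/

lemma gamma_topology_eq :
    (inferInstance : TopologicalSpace Gamma) =
      generateFrom {s : Set Gamma | ∃ a, s = Ioi a ∨ s = Iio a} := by
  apply le_antisymm
  · apply le_generateFrom
    rintro s ⟨a, rfl | rfl⟩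
    · rw [isOpen_iff_forall_mem_open]
      intro x hx
      obtain ⟨v, hv, hvx, hva⟩ := exists_sep (mem_Ioi.1 hx)
      exact ⟨Ici v, fun z hz => lt_of_lt_of_le (not_le.1 hva) hz, isOpen_Ici_gamma hv, hvx⟩
    · rw [isOpen_iff_forall_mem_open]
      intro x hx
      obtain ⟨v, hv, hvq, hxv, hva⟩ := exists_sep' (mem_Iio.1 hx)
      exact ⟨Iic v, fun z hz => lt_of_le_of_lt hz hva, isOpen_Iic_gamma hv hvq, hxv⟩
  · apply le_generateFrom
    rintro s (⟨v, hv, rfl⟩ | ⟨v, hv, hvq, rfl⟩)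
    · rcases eq_or_lt_of_le v.re_nonneg with h0 | h0
      · have he : Ici v = univ := by
          ext x
          simp only [mem_Ici, mem_univ, iff_true]
          rw [gzero_eq_of hv h0.symm]
          exact gzero_le x
        rw [he]
        exact @isOpen_univ _ (generateFrom _)
      · have he : Ici v = Ioi (mkMinus v.re h0 v.re_le_one) := by
          ext x
          simp only [mem_Ici, mem_Ioi]
          rw [Gamma.le_iff, Gamma.lt_iff]
          have hre : (mkMinus v.re h0 v.re_le_one).re = v.re := rfl
          have htag : (mkMinus v.re h0 v.re_le_one).tag = false := rfl
          rw [hre, htag]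
          constructor
          · rintro (h | ⟨h1, h2⟩)
            · exact Or.inl h
            · exact Or.inr ⟨h1, rfl, bool_true_le (by rw [← hv]; exact h2)⟩
          · rintro (h | ⟨h1, _, h3⟩)
            · exact Or.inl h
            · exact Or.inr ⟨h1, by rw [hv]; exact le_of_eq h3.symm⟩
        rw [he]
        exact TopologicalSpace.GenerateOpen.basic _ ⟨_, Or.inl rfl⟩
    · have h0 : 0 < v.re := Gamma.tag_pos hv
      have he : Iic v = Iio (Gamma.mk' v.re true
          (gammaValid_of _ _ v.re_nonneg v.re_le_one (fun _ => hvq) (fun hf => h0))) := by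
        ext x
        simp only [mem_Iic, mem_Iio]
        rw [Gamma.le_iff, Gamma.lt_iff, Gamma.re_mk', Gamma.tag_mk']
        constructor
        · rintro (h | ⟨h1, h2⟩)
          · exact Or.inl h
          · exact Or.inr ⟨h1, bool_le_false (by rw [← hv]; exact h2), rfl⟩
        · rintro (h | ⟨h1, h2, _⟩)
          · exact Or.inl h
          · exact Or.inr ⟨h1, by rw [hv, h2]⟩
      rw [he]
      exact TopologicalSpace.GenerateOpen.basic _ ⟨_, Or.inr rfl⟩

lemma gamma_compactSpace : CompactSpace Gamma := by
  letI := gammaCompleteLinearOrder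
  haveI : OrderTopology Gamma := ⟨gamma_topology_eq⟩
  exact @compactSpace_of_completeLinearOrder Gamma _ _ this

lemma subtype_le_iff {D : Type*} [Lattice D] [BoundedOrder D]
    {μ ν : {μ : D → Gamma // IsGMeasure μ}} : μ ≤ ν ↔ ∀ a, μ.1 a ≤ ν.1 a :=
  Iff.rfl

/-- for every (bounded) distributive lattice `D`, the set of `Γ`-valued
measures on `D` is closed in the product space `Γ^D`, and hence is itself a Priestley
space: compact, with closed order, and totally order-disconnected. -/
theorem measures_closed_priestley (D : Type*) [DistribLattice D] [BoundedOrder D] :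
    IsClosed {μ : D → Gamma | IsGMeasure μ} ∧
    CompactSpace {μ : D → Gamma // IsGMeasure μ} ∧
    IsClosed {p : {μ : D → Gamma // IsGMeasure μ} × {μ : D → Gamma // IsGMeasure μ} |
      p.1 ≤ p.2} ∧
    ∀ μ ν : {μ : D → Gamma // IsGMeasure μ}, ¬ μ ≤ ν →
      ∃ C : Set {μ : D → Gamma // IsGMeasure μ}, IsClopen C ∧ IsUpperSet C ∧ μ ∈ C ∧ ν ∉ C := by
  have hcl : IsClosed {μ : D → Gamma | IsGMeasure μ} := by
    have hset : {μ : D → Gamma | IsGMeasure μ} =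
        ((({μ : D → Gamma | μ ⊥ ≤ gzero} ∩ {μ : D → Gamma | gzero ≤ μ ⊥}) ∩
          ({μ : D → Gamma | μ ⊤ ≤ gone} ∩ {μ : D → Gamma | gone ≤ μ ⊤})) ∩
         (⋂ (a : D) (b : D) (_ : a ≤ b), {μ : D → Gamma | μ a ≤ μ b})) ∩
         (⋂ (a : D) (b : D), ({μ : D → Gamma |
            gsub' (μ a) (μ (a ⊓ b)) ≤ gsub (μ (a ⊔ b)) (μ b)} ∩
          {μ : D → Gamma | gsub' (μ (a ⊔ b)) (μ b) ≤ gsub (μ a) (μ (a ⊓ b))})) := by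
      ext μ
      simp only [IsGMeasure, Set.mem_setOf_eq, Set.mem_inter_iff, Set.mem_iInter]
      constructor
      · rintro ⟨h0, h1, hm, hab⟩
        exact ⟨⟨⟨⟨h0.le, h0.ge⟩, h1.le, h1.ge⟩, fun a b h => hm h⟩,
          fun a b => ⟨(hab a b).1, (hab a b).2⟩⟩
      · rintro ⟨⟨⟨⟨a1, a2⟩, b1, b2⟩, hm⟩, hab⟩
        exact ⟨le_antisymm a1 a2, le_antisymm b1 b2, fun x y h => hm x y h,
          fun a b => hab a b⟩
    rw [hset]
    refine IsClosed.inter (IsClosed.inter (IsClosed.inter ?_ ?_) ?_) ?_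
    · exact (isClosed_le_fun (continuous_apply ⊥) continuous_const).inter
        (isClosed_le_fun continuous_const (continuous_apply ⊥))
    · exact (isClosed_le_fun (continuous_apply ⊤) continuous_const).inter
        (isClosed_le_fun continuous_const (continuous_apply ⊤))
    · exact isClosed_iInter fun a => isClosed_iInter fun b => isClosed_iInter fun _ =>
        isClosed_le_fun (continuous_apply a) (continuous_apply b)
    · exact isClosed_iInter fun a => isClosed_iInter fun b =>
        (isClosed_gsub_fun (continuous_apply a) (continuous_apply (a ⊓ b))
          (continuous_apply (a ⊔ b)) (continuous_apply b)).inter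
        (isClosed_gsub_fun (continuous_apply (a ⊔ b)) (continuous_apply b)
          (continuous_apply a) (continuous_apply (a ⊓ b)))
  haveI : CompactSpace Gamma := gamma_compactSpace
  refine ⟨hcl, ?_, ?_, ?_⟩
  · exact isCompact_iff_compactSpace.mp hcl.isCompact
  · have hset : {p : {μ : D → Gamma // IsGMeasure μ} × {μ : D → Gamma // IsGMeasure μ} |
        p.1 ≤ p.2} = ⋂ a : D,
        {p : {μ : D → Gamma // IsGMeasure μ} × {μ : D → Gamma // IsGMeasure μ} |
          p.1.1 a ≤ p.2.1 a} := by
      ext p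
      simp only [Set.mem_setOf_eq, Set.mem_iInter]
      exact subtype_le_iff
    rw [hset]
    exact isClosed_iInter fun a => isClosed_le_fun
      ((continuous_apply a).comp (continuous_subtype_val.comp continuous_fst))
      ((continuous_apply a).comp (continuous_subtype_val.comp continuous_snd))
  · intro μ ν hle
    obtain ⟨a, ha⟩ : ∃ a, ¬ μ.1 a ≤ ν.1 a := by
      by_contra hc
      push_neg at hc
      exact hle (subtype_le_iff.2 hc)
    obtain ⟨v, hv, hvμ, hvν⟩ := exists_sep (not_le.1 ha)
    refine ⟨(fun ρ : {μ : D → Gamma // IsGMeasure μ} => ρ.1 a) ⁻¹' Set.Ici v, ?_, ?_, hvμ, hvν⟩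
    · exact (isClopen_Ici_gamma hv).preimage ((continuous_apply a).comp continuous_subtype_val)
    · intro ρ σ h hρ
      exact le_trans hρ (subtype_le_iff.1 h a)
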